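/- arXiv:1202.5813 — 6 statements merged into one kernel-verified Lean document; each statement's English description precedes it below -/
import Mathlib

section
/- Suppose f_j ∈ H(X) for all j ∈ ω, f_j⁻¹ → f⁻¹ pointwise where f ∈ H(X), and for all ε > 0 there is δ > 0 such that for all open U and all j, μ(U) < δ implies μ(f_j(U)) < ε. Then f is absolutely continuous. -/
open MeasureTheory Filter Topology ENNReal

/-- If `f_j` are self-homeomorphisms, `f_j⁻¹ → f⁻¹` pointwise with `f` a
homeomorphism, and the `f_j` are uniformly absolutely continuous, then `f` is
absolutely continuous. -/
theorem absolutelyContinuous_of_limit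
    {X : Type*} [MeasurableSpace X] [TopologicalSpace X]
    (μ : Measure X) (fj : ℕ → X ≃ₜ X) (f : X ≃ₜ X)
    (hlim : ∀ x, Tendsto (fun j => (fj j).symm x) atTop (𝓝 (f.symm x)))
    (hunif : ∀ ε : ℝ≥0∞, 0 < ε → ∃ δ : ℝ≥0∞, 0 < δ ∧
      ∀ U : Set X, IsOpen U → ∀ j, μ U < δ → μ ((fj j) '' U) < ε) :
    ∀ ε : ℝ≥0∞, 0 < ε → ∃ δ : ℝ≥0∞, 0 < δ ∧
      ∀ U : Set X, IsOpen U → μ U < δ → μ (f '' U) < ε := by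
  intro ε hε
  set ε' : ℝ≥0∞ := min ε 1 with hε'def
  have hε'pos : 0 < ε' := lt_min hε one_pos
  have hε'lt : ε' / 2 < ε :=
    lt_of_lt_of_le (ENNReal.half_lt_self hε'pos.ne' (lt_of_le_of_lt (min_le_right _ _) one_lt_top).ne)
      (min_le_left _ _)
  obtain ⟨δ, hδ, hδ'⟩ := hunif (ε' / 2) (ENNReal.half_pos hε'pos.ne')
  refine ⟨δ, hδ, fun U hU hμU => ?_⟩
  -- f '' U ⊆ ⋃ k, ⋂ j ≥ k, fj j '' U
  have hsub : (f : X → X) '' U ⊆ ⋃ k, ⋂ j, ⋂ _ : k ≤ j, (fj j : X → X) '' U := by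
    rintro x hx
    have hxU : f.symm x ∈ U := by
      rcases hx with ⟨y, hy, rfl⟩
      simpa using hy
    have := (hlim x).eventually (hU.eventually_mem hxU)
    rcases eventually_atTop.1 this with ⟨k, hk⟩
    refine Set.mem_iUnion.2 ⟨k, ?_⟩
    refine Set.mem_iInter.2 fun j => Set.mem_iInter.2 fun hj => ?_
    exact ⟨(fj j).symm x, hk j hj, by simp⟩
  have hmono : Monotone fun k => ⋂ j, ⋂ _ : k ≤ j, (fj j : X → X) '' U := by
    intro a b hab
    exact Set.iInter₂_mono' fun j hj => ⟨j, hab.trans hj, le_rfl⟩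
  calc μ ((f : X → X) '' U) ≤ μ (⋃ k, ⋂ j, ⋂ _ : k ≤ j, (fj j : X → X) '' U) :=
        measure_mono hsub
    _ = ⨆ k, μ (⋂ j, ⋂ _ : k ≤ j, (fj j : X → X) '' U) :=
        hmono.directed_le.measure_iUnion
    _ ≤ ε' / 2 := by
        refine iSup_le fun k => le_of_lt ?_
        refine lt_of_le_of_lt (measure_mono ?_) (hδ' U hU k hμU)
        exact Set.iInter₂_subset k le_rfl
    _ < ε := hε'lt
end

section
/- In ℝⁿ, suppose ‖w − v‖ = T, ‖x − v‖ = r, ‖y − w‖ = s, and T ≥ r + s. Let β = ∠(w − v, y − x). Then β ≤ π(r+s)/(2T). -/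
open InnerProductGeometry Real
open scoped RealInnerProductSpace

/-- The "Earth–Moon" angle estimate. -/
theorem angle_le_of_balls {n : ℕ}
    (v w x y : EuclideanSpace ℝ (Fin n)) (T r s : ℝ)
    (hT : ‖w - v‖ = T) (hrr : ‖x - v‖ = r) (hs : ‖y - w‖ = s)
    (hTrs : r + s ≤ T) (hxy : y ≠ x) :
    angle (w - v) (y - x) ≤ π * (r + s) / (2 * T) := by
  set u := w - v with hu
  set z := y - x with hz
  have hzne : z ≠ 0 := sub_ne_zero.2 hxy
  have hzpos : 0 < ‖z‖ := norm_pos_iff.2 hzne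
  have he : ‖z - u‖ ≤ r + s := by
    have : z - u = (y - w) - (x - v) := by rw [hz, hu]; abel
    rw [this]
    calc ‖(y - w) - (x - v)‖ ≤ ‖y - w‖ + ‖x - v‖ := norm_sub_le _ _
      _ = r + s := by rw [hs, hrr]; ring
  have hT0 : 0 < T := by
    rcases lt_or_eq_of_le (hT ▸ norm_nonneg (w - v)) with h | h
    · exact h
    · exfalso
      have hr0 : 0 ≤ r := hrr ▸ norm_nonneg _
      have hs0 : 0 ≤ s := hs ▸ norm_nonneg _
      have : ‖z - u‖ = 0 := le_antisymm (by linarith) (norm_nonneg _)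
      have hzu : z = u := sub_eq_zero.1 (by rwa [norm_eq_zero] at this)
      have : ‖z‖ = 0 := by rw [hzu, hu, hT, ← h]
      exact hzne (norm_eq_zero.1 this)
  have hun : ‖u‖ = T := hT
  -- inner u z ≥ 0
  have hinner : 0 ≤ ⟪u, z⟫ := by
    have h1 : ⟪u, z⟫ = ‖u‖ ^ 2 + ⟪u, z - u⟫ := by
      simp only [inner_sub_right, real_inner_self_eq_norm_sq]; ring
    have h2 : |⟪u, z - u⟫| ≤ ‖u‖ * ‖z - u‖ := abs_real_inner_le_norm _ _
    have h3 : -(T * (r + s)) ≤ ⟪u, z - u⟫ := by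
      have := neg_le_of_abs_le h2
      have h4 : ‖u‖ * ‖z - u‖ ≤ T * (r + s) := by
        rw [hun]; exact mul_le_mul_of_nonneg_left he hT0.le
      linarith
    nlinarith [norm_nonneg (z - u), he, sq_nonneg T]
  -- β ≤ π/2
  have hb2 : angle u z ≤ π / 2 := by
    rw [angle, Real.arccos_le_pi_div_two]
    positivity
  -- sin β * ‖u‖ ≤ ‖z - u‖
  have hsin : Real.sin (angle u z) * T ≤ r + s := by
    have key : Real.sin (angle u z) * (‖u‖ * ‖z‖) ≤ ‖z‖ * ‖z - u‖ := by
      rw [sin_angle_mul_norm_mul_norm]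
      have hle : ⟪u, u⟫ * ⟪z, z⟫ - ⟪u, z⟫ * ⟪u, z⟫ ≤ (‖z‖ * ‖z - u‖) ^ 2 := by
        nlinarith [sq_nonneg (‖z‖ ^ 2 - ⟪u, z⟫), norm_sub_sq_real z u,
          real_inner_comm z u, real_inner_self_eq_norm_sq u, real_inner_self_eq_norm_sq z,
          norm_nonneg (z - u), norm_nonneg z, norm_nonneg u]
      calc √(⟪u, u⟫ * ⟪z, z⟫ - ⟪u, z⟫ * ⟪u, z⟫)
          ≤ √((‖z‖ * ‖z - u‖) ^ 2) := Real.sqrt_le_sqrt hle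
        _ = ‖z‖ * ‖z - u‖ := Real.sqrt_sq (by positivity)
    rw [hun] at key
    have := (mul_le_mul_iff_right₀ hzpos).1 (by
      calc ‖z‖ * (Real.sin (angle u z) * T) = Real.sin (angle u z) * (T * ‖z‖) := by ring
        _ ≤ ‖z‖ * ‖z - u‖ := key
        _ ≤ ‖z‖ * (r + s) := mul_le_mul_of_nonneg_left he hzpos.le)
    exact this
  -- conclude
  have hβ0 : 0 ≤ angle u z := angle_nonneg _ _
  have h2pi : 2 / π * angle u z ≤ Real.sin (angle u z) := Real.mul_le_sin hβ0 hb2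
  have hπ : 0 < π := Real.pi_pos
  have hle1 : 2 / π * angle u z * T ≤ r + s :=
    le_trans (mul_le_mul_of_nonneg_right h2pi hT0.le) hsin
  have hle2 : π * (2 / π * angle u z * T) ≤ π * (r + s) :=
    mul_le_mul_of_nonneg_left hle1 hπ.le
  rw [le_div_iff₀ (by positivity)]
  calc angle u z * (2 * T) = π * (2 / π * angle u z * T) := by field_simp
    _ ≤ π * (r + s) := hle2
end

section
/- Assume h(v) = A(‖v‖)v, where A : [0,∞) → M^n, each A(r) is nonsingular, and M := sup_r ‖A(r)⁻¹‖ < ∞. Fix ε ∈ (0, π/2) and assume ‖A((1+σ)r) − A(r)‖ < (εσ)/(πM) for all σ, r > 0. Then ‖h(v₁) − h(v₀)‖ ≥ ‖v₁ − v₀‖/(2M) for all v₀, v₁ ∈ ℝⁿ; in particular h is injective. -/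
open Real

theorem morph_expansion_lower_bound {n : ℕ}
    (A : ℝ → (EuclideanSpace ℝ (Fin n) ≃L[ℝ] EuclideanSpace ℝ (Fin n)))
    (h : EuclideanSpace ℝ (Fin n) → EuclideanSpace ℝ (Fin n))
    (hh : ∀ v, h v = A ‖v‖ v)
    (M : ℝ) (hM : 0 < M)
    (hMbound : ∀ r : ℝ, ‖((A r).symm : EuclideanSpace ℝ (Fin n) →L[ℝ] EuclideanSpace ℝ (Fin n))‖ ≤ M)
    (ε : ℝ) (hε : ε ∈ Set.Ioo 0 (π / 2))
    (hA : ∀ σ r : ℝ, 0 < σ → 0 < r →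
      ‖((A ((1 + σ) * r) : EuclideanSpace ℝ (Fin n) →L[ℝ] EuclideanSpace ℝ (Fin n))
        - (A r : EuclideanSpace ℝ (Fin n) →L[ℝ] EuclideanSpace ℝ (Fin n)))‖ < ε * σ / (π * M)) :
    (∀ v₀ v₁ : EuclideanSpace ℝ (Fin n), ‖v₁ - v₀‖ / (2 * M) ≤ ‖h v₁ - h v₀‖) ∧
      Function.Injective h := by
  obtain ⟨hε0, hεπ⟩ := hε
  have hπ : (0:ℝ) < π := Real.pi_pos
  -- key inverse bound
  have key : ∀ (r : ℝ) (x : EuclideanSpace ℝ (Fin n)), ‖x‖ ≤ M * ‖A r x‖ := by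
    intro r x
    have e : x = ((A r).symm : EuclideanSpace ℝ (Fin n) →L[ℝ] EuclideanSpace ℝ (Fin n))
        ((A r) x) := by simp
    calc ‖x‖ = ‖((A r).symm : EuclideanSpace ℝ (Fin n) →L[ℝ] EuclideanSpace ℝ (Fin n))
          ((A r) x)‖ := by rw [← e]
      _ ≤ ‖((A r).symm : EuclideanSpace ℝ (Fin n) →L[ℝ] EuclideanSpace ℝ (Fin n))‖ * ‖A r x‖ :=
          ContinuousLinearMap.le_opNorm _ _
      _ ≤ M * ‖A r x‖ := mul_le_mul_of_nonneg_right (hMbound r) (norm_nonneg _)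
  have main : ∀ v₀ v₁ : EuclideanSpace ℝ (Fin n), ‖v₀‖ ≤ ‖v₁‖ →
      ‖v₁ - v₀‖ / (2 * M) ≤ ‖h v₁ - h v₀‖ := by
    intro v₀ v₁ hle
    rcases eq_or_lt_of_le hle with heq | hlt
    · -- equal norms : h v₁ - h v₀ = A ‖v₁‖ (v₁ - v₀)
      have hd : h v₁ - h v₀ = A ‖v₁‖ (v₁ - v₀) := by
        rw [hh, hh, heq, map_sub]
      rw [hd, div_le_iff₀ (by positivity)]
      nlinarith [key ‖v₁‖ (v₁ - v₀), norm_nonneg (A ‖v₁‖ (v₁ - v₀))]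
    · rcases eq_or_lt_of_le (norm_nonneg v₀) with hv0 | hv0
      · -- v₀ = 0
        have hz : v₀ = 0 := by rw [← norm_eq_zero]; exact hv0.symm
        have hd : h v₁ - h v₀ = A ‖v₁‖ (v₁ - v₀) := by
          rw [hh, hh, hz]; simp
        rw [hd, div_le_iff₀ (by positivity)]
        nlinarith [key ‖v₁‖ (v₁ - v₀), norm_nonneg (A ‖v₁‖ (v₁ - v₀))]
      · -- 0 < ‖v₀‖ < ‖v₁‖
        have hσpos : 0 < (‖v₁‖ - ‖v₀‖) / ‖v₀‖ := div_pos (by linarith) hv0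
        have hrr : (1 + (‖v₁‖ - ‖v₀‖) / ‖v₀‖) * ‖v₀‖ = ‖v₁‖ := by
          field_simp
          ring
        have hAd := hA _ _ hσpos hv0
        rw [hrr] at hAd
        set B₁ := (A ‖v₁‖ : EuclideanSpace ℝ (Fin n) →L[ℝ] EuclideanSpace ℝ (Fin n)) with hB₁
        set B₀ := (A ‖v₀‖ : EuclideanSpace ℝ (Fin n) →L[ℝ] EuclideanSpace ℝ (Fin n)) with hB₀
        have hd : h v₁ - h v₀ = B₁ (v₁ - v₀) + (B₁ - B₀) v₀ := by
          rw [hh, hh]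
          simp only [hB₁, hB₀, ContinuousLinearMap.sub_apply, map_sub,
            ContinuousLinearEquiv.coe_coe]
          abel
        have h1 : ‖B₁ (v₁ - v₀)‖ ≤ ‖B₁ (v₁ - v₀) + (B₁ - B₀) v₀‖ + ‖(B₁ - B₀) v₀‖ := by
          calc ‖B₁ (v₁ - v₀)‖ = ‖(B₁ (v₁ - v₀) + (B₁ - B₀) v₀) - (B₁ - B₀) v₀‖ := by
                rw [add_sub_cancel_right]
            _ ≤ _ := norm_sub_le _ _
        have h2 : ‖v₁ - v₀‖ ≤ M * ‖B₁ (v₁ - v₀)‖ := key ‖v₁‖ (v₁ - v₀)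
        have hb' : ‖(B₁ - B₀) v₀‖ ≤ ε * ((‖v₁‖ - ‖v₀‖) / ‖v₀‖) / (π * M) * ‖v₀‖ := by
          calc ‖(B₁ - B₀) v₀‖ ≤ ‖B₁ - B₀‖ * ‖v₀‖ := (B₁ - B₀).le_opNorm v₀
            _ ≤ _ := mul_le_mul_of_nonneg_right hAd.le (norm_nonneg v₀)
        have e1 : ε * ((‖v₁‖ - ‖v₀‖) / ‖v₀‖) / (π * M) * ‖v₀‖ * (2 * M)
            = 2 * ε * (‖v₁‖ - ‖v₀‖) / π := by
          field_simp [hv0.ne', hπ.ne', hM.ne']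
        have e2 : 2 * ε * (‖v₁‖ - ‖v₀‖) / π ≤ ‖v₁‖ - ‖v₀‖ := by
          rw [div_le_iff₀ hπ]
          nlinarith
        have h6 : ‖v₁‖ - ‖v₀‖ ≤ ‖v₁ - v₀‖ := by
          have := norm_sub_norm_le v₁ v₀
          linarith
        have h7 : ‖(B₁ - B₀) v₀‖ * (2 * M) ≤ ‖v₁ - v₀‖ := by
          calc ‖(B₁ - B₀) v₀‖ * (2 * M)
              ≤ ε * ((‖v₁‖ - ‖v₀‖) / ‖v₀‖) / (π * M) * ‖v₀‖ * (2 * M) :=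
                mul_le_mul_of_nonneg_right hb' (by positivity)
            _ = 2 * ε * (‖v₁‖ - ‖v₀‖) / π := e1
            _ ≤ ‖v₁‖ - ‖v₀‖ := e2
            _ ≤ ‖v₁ - v₀‖ := h6
        rw [hd, div_le_iff₀ (by positivity)]
        nlinarith [h1, h2, h7, mul_le_mul_of_nonneg_left h1 hM.le]
  constructor
  · intro v₀ v₁
    rcases le_total ‖v₀‖ ‖v₁‖ with hle | hle
    · exact main v₀ v₁ hle
    · rw [norm_sub_rev v₁ v₀, norm_sub_rev (h v₁) (h v₀)]
      exact main v₁ v₀ hle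
  · intro v₀ v₁ heq
    have hb : ‖v₀ - v₁‖ / (2 * M) ≤ ‖h v₀ - h v₁‖ := by
      rcases le_total ‖v₁‖ ‖v₀‖ with hle | hle
      · exact main v₁ v₀ hle
      · rw [norm_sub_rev v₀ v₁, norm_sub_rev (h v₀) (h v₁)]
        exact main v₀ v₁ hle
    rw [heq, sub_self, norm_zero] at hb
    have h0 : ‖v₀ - v₁‖ ≤ 0 := by
      rw [div_le_iff₀ (by positivity)] at hb
      linarith
    have : v₀ - v₁ = 0 := by
      rw [← norm_eq_zero]
      linarith [norm_nonneg (v₀ - v₁)]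
    exact sub_eq_zero.mp this
end

section
/- Assume h(v) = A(‖v‖)v, where A : [0,∞) → M^n, each A(r) is nonsingular with tw(A(r)) < θ, and M := sup_r ‖A(r)⁻¹‖ < ∞. Fix ε ∈ (0, π/2) and assume ‖A((1+σ)r) − A(r)‖ < (εσ)/(πM) for all σ, r > 0. Then tw(h) < θ + ε/2, i.e., ∠(v₁ − v₀, h(v₁) − h(v₀)) < θ + ε/2 whenever v₀ ≠ v₁ and h(v₀) ≠ h(v₁). -/
open Real InnerProductGeometry

/-- The twist of a continuous linear equivalence. -/
noncomputable def twCLE {n : ℕ}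
    (B : EuclideanSpace ℝ (Fin n) ≃L[ℝ] EuclideanSpace ℝ (Fin n)) : ℝ :=
  sSup {a | ∃ v : EuclideanSpace ℝ (Fin n), v ≠ 0 ∧ a = angle v (B v)}

open RealInnerProductSpace

variable {V : Type*} [NormedAddCommGroup V] [InnerProductSpace ℝ V]

private theorem my_arccos_le_arccos {a b : ℝ} (h₂ : a ≤ b) : arccos b ≤ arccos a := by
  unfold Real.arccos
  have := Real.monotone_arcsin h₂
  linarith

private theorem my_angle_triangle_unit (x y z : V) (hx : ‖x‖ = 1) (hy : ‖y‖ = 1) (hz : ‖z‖ = 1) :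
    angle x z ≤ angle x y + angle y z := by
  by_cases hπ : angle x y + angle y z ≤ π
  · set c₁ : ℝ := ⟪x, y⟫ with hc₁
    set c₂ : ℝ := ⟪y, z⟫ with hc₂
    set c₃ : ℝ := ⟪x, z⟫ with hc₃
    have hxy : angle x y = Real.arccos c₁ := by simp [angle, hx, hy, hc₁]
    have hyz : angle y z = Real.arccos c₂ := by simp [angle, hy, hz, hc₂]
    have hxz : angle x z = Real.arccos c₃ := by simp [angle, hx, hz, hc₃]
    have hb₁ : |c₁| ≤ 1 := by simpa [hx, hy] using abs_real_inner_le_norm x y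
    have hb₂ : |c₂| ≤ 1 := by simpa [hy, hz] using abs_real_inner_le_norm y z
    have hyy : (⟪y, y⟫ : ℝ) = 1 := by
      rw [real_inner_self_eq_norm_sq, hy]; norm_num
    have hyx : (⟪y, x⟫ : ℝ) = c₁ := (real_inner_comm y x).symm
    have hzy : (⟪z, y⟫ : ℝ) = c₂ := (real_inner_comm z y).symm
    have hpq : (⟪x - c₁ • y, z - c₂ • y⟫ : ℝ) = c₃ - c₁ * c₂ := by
      simp only [inner_sub_left, inner_sub_right, real_inner_smul_left, real_inner_smul_right,
        hyy, hyx, hzy, ← hc₁, ← hc₂, ← hc₃]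
      ring
    have hp2 : ‖x - c₁ • y‖ ^ 2 = 1 - c₁ ^ 2 := by
      rw [norm_sub_sq_real, real_inner_smul_right, norm_smul, hx, hy, ← hc₁]
      simp [Real.norm_eq_abs, sq_abs]
      ring
    have hq2 : ‖z - c₂ • y‖ ^ 2 = 1 - c₂ ^ 2 := by
      rw [norm_sub_sq_real, real_inner_smul_right, norm_smul, hz, hy]
      have : (⟪z, y⟫ : ℝ) = c₂ := hzy
      rw [this]
      simp [Real.norm_eq_abs, sq_abs]
      ring
    have hp : ‖x - c₁ • y‖ = Real.sqrt (1 - c₁ ^ 2) := by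
      rw [← hp2, Real.sqrt_sq (norm_nonneg _)]
    have hq : ‖z - c₂ • y‖ = Real.sqrt (1 - c₂ ^ 2) := by
      rw [← hq2, Real.sqrt_sq (norm_nonneg _)]
    have hCS : |c₃ - c₁ * c₂| ≤ Real.sqrt (1 - c₁ ^ 2) * Real.sqrt (1 - c₂ ^ 2) := by
      rw [← hpq, ← hp, ← hq]; exact abs_real_inner_le_norm _ _
    have hcos : Real.cos (angle x y + angle y z) ≤ c₃ := by
      rw [hxy, hyz, Real.cos_add, Real.cos_arccos (abs_le.mp hb₁).1 (abs_le.mp hb₁).2,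
        Real.cos_arccos (abs_le.mp hb₂).1 (abs_le.mp hb₂).2, Real.sin_arccos, Real.sin_arccos]
      have := (abs_le.mp hCS).1
      linarith
    calc angle x z = Real.arccos c₃ := hxz
      _ ≤ Real.arccos (Real.cos (angle x y + angle y z)) := my_arccos_le_arccos hcos
      _ = angle x y + angle y z :=
          Real.arccos_cos (add_nonneg (angle_nonneg _ _) (angle_nonneg _ _)) hπ
  · exact (angle_le_pi x z).trans (le_of_not_ge hπ)

private theorem my_angle_triangle (x y z : V) (hx : x ≠ 0) (hy : y ≠ 0) (hz : z ≠ 0) :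
    angle x z ≤ angle x y + angle y z := by
  have hx' : (0:ℝ) < ‖x‖⁻¹ := inv_pos.2 (norm_pos_iff.2 hx)
  have hy' : (0:ℝ) < ‖y‖⁻¹ := inv_pos.2 (norm_pos_iff.2 hy)
  have hz' : (0:ℝ) < ‖z‖⁻¹ := inv_pos.2 (norm_pos_iff.2 hz)
  have := my_angle_triangle_unit (‖x‖⁻¹ • x) (‖y‖⁻¹ • y) (‖z‖⁻¹ • z)
    (norm_smul_inv_norm hx) (norm_smul_inv_norm hy) (norm_smul_inv_norm hz)
  simpa [angle_smul_left_of_pos, angle_smul_right_of_pos, hx', hy', hz'] using this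


variable {V : Type*} [NormedAddCommGroup V] [InnerProductSpace ℝ V]

private theorem my_angle_perturb (x w : V) {δ : ℝ} (hδ0 : 0 < δ) (hδ1 : δ ≤ π / 2)
    (hw : ‖w‖ < Real.sin δ * ‖x‖) (hz : x + w ≠ 0) : angle x (x + w) < δ := by
  have hs0 : 0 < Real.sin δ := Real.sin_pos_of_pos_of_lt_pi hδ0 (lt_of_le_of_lt hδ1 (by linarith [Real.pi_pos]))
  have hs1 : Real.sin δ ≤ 1 := Real.sin_le_one δ
  have hx0 : (0:ℝ) < ‖x‖ := by
    by_contra hc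
    push_neg at hc
    nlinarith [norm_nonneg w, norm_nonneg x]
  have hzn : (0:ℝ) < ‖x + w‖ := norm_pos_iff.2 hz
  set a : ℝ := ‖x‖ ^ 2 with ha
  set b : ℝ := ‖w‖ ^ 2 with hb
  set p : ℝ := ⟪x, w⟫ with hp
  have hb_lt : b < Real.sin δ ^ 2 * a := by
    have h1 : ‖w‖ * ‖w‖ < (Real.sin δ * ‖x‖) * (Real.sin δ * ‖x‖) :=
      mul_self_lt_mul_self (norm_nonneg w) hw
    nlinarith
  have hpab : p ^ 2 ≤ a * b := by
    have := abs_real_inner_le_norm x w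
    nlinarith [abs_nonneg (⟪x, w⟫ : ℝ), sq_abs (⟪x, w⟫ : ℝ), le_abs_self (⟪x, w⟫ : ℝ), neg_abs_le (⟪x, w⟫ : ℝ)]
  have hinner : (⟪x, x + w⟫ : ℝ) = a + p := by
    rw [inner_add_right, real_inner_self_eq_norm_sq]
  have hzsq : ‖x + w‖ ^ 2 = a + 2 * p + b := by
    rw [norm_add_sq_real]; try ring
  have hap : 0 < a + p := by
    have h1 : -(‖x‖ * ‖w‖) ≤ p := by
      have := abs_real_inner_le_norm x w
      have := neg_abs_le (⟪x, w⟫ : ℝ)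
      linarith
    nlinarith
  have hkey : (1 - Real.sin δ ^ 2) * (a * ‖x + w‖ ^ 2) < (a + p) ^ 2 := by
    rw [hzsq]
    nlinarith [sq_nonneg (p + b), mul_pos (sub_pos.2 hb_lt) (hzsq ▸ pow_pos hzn 2), pow_pos hx0 2]
  -- cos δ < cos (angle x (x+w))
  have hcosδ : 0 ≤ Real.cos δ := Real.cos_nonneg_of_mem_Icc ⟨by linarith, hδ1⟩
  have hcossq : Real.cos δ ^ 2 = 1 - Real.sin δ ^ 2 := Real.cos_sq' δ
  have hcosa : Real.cos (angle x (x + w)) = (a + p) / (‖x‖ * ‖x + w‖) := by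
    rw [cos_angle, hinner]
  have hlt : Real.cos δ < Real.cos (angle x (x + w)) := by
    rw [hcosa]
    rw [lt_div_iff₀ (by positivity)]
    have hxz2 : (‖x‖ * ‖x + w‖) ^ 2 = a * ‖x + w‖ ^ 2 := by rw [mul_pow, ha]
    nlinarith [mul_pos hx0 hzn, hkey]
  by_contra hc
  push_neg at hc
  have : Real.cos (angle x (x + w)) ≤ Real.cos δ :=
    Real.cos_le_cos_of_nonneg_of_le_pi (by linarith) (angle_le_pi x (x + w)) hc
  linarith

private theorem my_angle_le_twCLE {n : ℕ}
    (B : EuclideanSpace ℝ (Fin n) ≃L[ℝ] EuclideanSpace ℝ (Fin n))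
    (v : EuclideanSpace ℝ (Fin n)) (hv : v ≠ 0) : angle v (B v) ≤ twCLE B := by
  apply le_csSup
  · refine ⟨π, ?_⟩
    rintro a ⟨u, hu, rfl⟩
    exact angle_le_pi _ _
  · exact ⟨v, hv, rfl⟩

private theorem my_key {n : ℕ} (θ : ℝ)
    (A : ℝ → (EuclideanSpace ℝ (Fin n) ≃L[ℝ] EuclideanSpace ℝ (Fin n)))
    (h : EuclideanSpace ℝ (Fin n) → EuclideanSpace ℝ (Fin n))
    (hh : ∀ v, h v = A ‖v‖ v)
    (htw : ∀ r : ℝ, twCLE (A r) < θ)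
    (M : ℝ) (hM : 0 < M)
    (hMbound : ∀ r : ℝ, ‖((A r).symm : EuclideanSpace ℝ (Fin n) →L[ℝ] EuclideanSpace ℝ (Fin n))‖ ≤ M)
    (ε : ℝ) (hε : ε ∈ Set.Ioo 0 (π / 2))
    (hA : ∀ σ r : ℝ, 0 < σ → 0 < r →
      ‖((A ((1 + σ) * r) : EuclideanSpace ℝ (Fin n) →L[ℝ] EuclideanSpace ℝ (Fin n))
        - (A r : EuclideanSpace ℝ (Fin n) →L[ℝ] EuclideanSpace ℝ (Fin n)))‖ < ε * σ / (π * M))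
    (v₀ v₁ : EuclideanSpace ℝ (Fin n)) (hne : v₀ ≠ v₁) (hhne : h v₀ ≠ h v₁)
    (hle : ‖v₀‖ ≤ ‖v₁‖) :
    angle (v₁ - v₀) (h v₁ - h v₀) < θ + ε / 2 := by
  obtain ⟨hε0, hεπ⟩ := hε
  have hπ := Real.pi_pos
  set u := v₁ - v₀ with hu_def
  have hu : u ≠ 0 := sub_ne_zero_of_ne hne.symm
  set x := A ‖v₁‖ u with hx_def
  have hx0 : x ≠ 0 := by
    rw [hx_def, ne_eq, ContinuousLinearEquiv.map_eq_zero_iff]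
    exact hu
  set w := ((A ‖v₁‖ : EuclideanSpace ℝ (Fin n) →L[ℝ] EuclideanSpace ℝ (Fin n))
      - (A ‖v₀‖ : EuclideanSpace ℝ (Fin n) →L[ℝ] EuclideanSpace ℝ (Fin n))) v₀ with hw_def
  have hdecomp : h v₁ - h v₀ = x + w := by
    rw [hh, hh, hw_def, hx_def, hu_def]
    simp only [ContinuousLinearMap.sub_apply, ContinuousLinearEquiv.coe_coe, map_sub]
    abel
  have hangle1 : angle u x < θ := lt_of_le_of_lt (my_angle_le_twCLE (A ‖v₁‖) u hu) (htw ‖v₁‖)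
  have hzne : x + w ≠ 0 := by
    rw [← hdecomp]
    exact sub_ne_zero_of_ne hhne.symm
  rw [hdecomp]
  by_cases hw0 : w = 0
  · rw [hw0, add_zero]
    linarith
  · have hv₀ : v₀ ≠ 0 := by
      intro h0
      exact hw0 (by rw [hw_def, h0, map_zero])
    have hrne : ‖v₀‖ ≠ ‖v₁‖ := by
      intro he
      exact hw0 (by rw [hw_def, he, sub_self, ContinuousLinearMap.zero_apply])
    have hr₀ : (0:ℝ) < ‖v₀‖ := norm_pos_iff.2 hv₀
    have hr : ‖v₀‖ < ‖v₁‖ := lt_of_le_of_ne hle hrne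
    set σ : ℝ := ‖v₁‖ / ‖v₀‖ - 1 with hσ_def
    have hσ : 0 < σ := by
      rw [hσ_def]
      have h1 : 1 < ‖v₁‖ / ‖v₀‖ := (one_lt_div hr₀).2 hr
      linarith
    have hσr : (1 + σ) * ‖v₀‖ = ‖v₁‖ := by
      rw [hσ_def]
      field_simp
      ring
    have hσr' : σ * ‖v₀‖ = ‖v₁‖ - ‖v₀‖ := by nlinarith [hσr]
    have hAop := hA σ ‖v₀‖ hσ hr₀
    rw [hσr] at hAop
    have hwle : ‖w‖ ≤ ‖((A ‖v₁‖ : EuclideanSpace ℝ (Fin n) →L[ℝ] EuclideanSpace ℝ (Fin n))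
        - (A ‖v₀‖ : EuclideanSpace ℝ (Fin n) →L[ℝ] EuclideanSpace ℝ (Fin n)))‖ * ‖v₀‖ :=
      ContinuousLinearMap.le_opNorm _ v₀
    have hw1 : ‖w‖ < ε * σ / (π * M) * ‖v₀‖ :=
      hwle.trans_lt (mul_lt_mul_of_pos_right hAop hr₀)
    have hw2 : ‖w‖ < ε * (‖v₁‖ - ‖v₀‖) / (π * M) := by
      have : ε * σ / (π * M) * ‖v₀‖ = ε * (σ * ‖v₀‖) / (π * M) := by ring
      rw [this, hσr'] at hw1
      exact hw1
    have hu_ge : ‖v₁‖ - ‖v₀‖ ≤ ‖u‖ := norm_sub_norm_le v₁ v₀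
    have hxpos : (0:ℝ) < ‖x‖ := norm_pos_iff.2 hx0
    have hux : ‖u‖ ≤ M * ‖x‖ := by
      have heq : (A ‖v₁‖).symm x = u := by
        rw [hx_def]; exact (A ‖v₁‖).symm_apply_apply u
      calc ‖u‖ = ‖(A ‖v₁‖).symm x‖ := by rw [heq]
        _ ≤ ‖((A ‖v₁‖).symm : EuclideanSpace ℝ (Fin n) →L[ℝ] EuclideanSpace ℝ (Fin n))‖ * ‖x‖ := by
            have hb := ContinuousLinearMap.le_opNorm
              ((A ‖v₁‖).symm : EuclideanSpace ℝ (Fin n) →L[ℝ] EuclideanSpace ℝ (Fin n)) x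
            simp only [ContinuousLinearEquiv.coe_coe] at hb
            exact hb
        _ ≤ M * ‖x‖ := mul_le_mul_of_nonneg_right (hMbound ‖v₁‖) (norm_nonneg x)
    have hj : ε / π ≤ Real.sin (ε / 2) := by
      have := Real.mul_le_sin (x := ε / 2) (by linarith) (by linarith)
      calc ε / π = 2 / π * (ε / 2) := by ring
        _ ≤ Real.sin (ε / 2) := this
    have hwfin : ‖w‖ < Real.sin (ε / 2) * ‖x‖ := by
      have c1 : ε * (‖v₁‖ - ‖v₀‖) / (π * M) ≤ ε * ‖u‖ / (π * M) := by gcongr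
      have c2 : ε * ‖u‖ / (π * M) ≤ ε * (M * ‖x‖) / (π * M) := by gcongr
      have c3 : ε * (M * ‖x‖) / (π * M) = ε / π * ‖x‖ := by field_simp
      have c4 : ε / π * ‖x‖ ≤ Real.sin (ε / 2) * ‖x‖ :=
        mul_le_mul_of_nonneg_right hj (norm_nonneg x)
      linarith
    have hangle2 : angle x (x + w) < ε / 2 :=
      my_angle_perturb x w (by linarith) (by linarith) hwfin hzne
    have htri : angle u (x + w) ≤ angle u x + angle x (x + w) :=
      my_angle_triangle u x (x + w) hu hx0 hzne
    linarith

theorem morph_twist_bound {n : ℕ} (θ : ℝ)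
    (A : ℝ → (EuclideanSpace ℝ (Fin n) ≃L[ℝ] EuclideanSpace ℝ (Fin n)))
    (h : EuclideanSpace ℝ (Fin n) → EuclideanSpace ℝ (Fin n))
    (hh : ∀ v, h v = A ‖v‖ v)
    (htw : ∀ r : ℝ, twCLE (A r) < θ)
    (M : ℝ) (hM : 0 < M)
    (hMbound : ∀ r : ℝ, ‖((A r).symm : EuclideanSpace ℝ (Fin n) →L[ℝ] EuclideanSpace ℝ (Fin n))‖ ≤ M)
    (ε : ℝ) (hε : ε ∈ Set.Ioo 0 (π / 2))
    (hA : ∀ σ r : ℝ, 0 < σ → 0 < r →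
      ‖((A ((1 + σ) * r) : EuclideanSpace ℝ (Fin n) →L[ℝ] EuclideanSpace ℝ (Fin n))
        - (A r : EuclideanSpace ℝ (Fin n) →L[ℝ] EuclideanSpace ℝ (Fin n)))‖ < ε * σ / (π * M)) :
    ∀ v₀ v₁ : EuclideanSpace ℝ (Fin n), v₀ ≠ v₁ → h v₀ ≠ h v₁ →
      angle (v₁ - v₀) (h v₁ - h v₀) < θ + ε / 2 := by
  intro v₀ v₁ hne hhne
  rcases le_total ‖v₀‖ ‖v₁‖ with hle | hle
  · exact my_key θ A h hh htw M hM hMbound ε hε hA v₀ v₁ hne hhne hle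
  · have := my_key θ A h hh htw M hM hMbound ε hε hA v₁ v₀ hne.symm hhne.symm hle
    rw [← neg_sub v₁ v₀, ← neg_sub (h v₁) (h v₀), angle_neg_neg] at this
    exact this
end

section
/- Let F_θ be the set of C¹ bijections f of ℝⁿ with C¹ inverse, tw(f) < θ, and f(x) = c + x for ‖x‖ ≥ r for some c ∈ ℝⁿ, r > 0. Fix f ∈ F_θ, θ̂ ∈ (tw(f), θ) with θ − θ̂ < π/2, and let g : ℝⁿ → ℝⁿ be C¹ with g(x) = 0 for ‖x‖ ≥ r′ for some r′, and suppose ‖g(v₁) − g(v₀)‖ ≤ (2/π)(θ − θ̂)·‖f(v₁) − f(v₀)‖ for all v₀, v₁ ∈ ℝⁿ. Then f + g ∈ F_θ, and moreover d(f, f+g) ≤ ‖g‖_∞ · max(1, ‖J_{f⁻¹}‖). -/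
open Real InnerProductGeometry

section AngleAux

variable {V : Type*} [NormedAddCommGroup V] [InnerProductSpace ℝ V]

local notation "⟪" x ", " y "⟫" => @inner ℝ _ _ x y

private lemma aux_inner_ge {x y z : V} (hx : ‖x‖ = 1) (hy : ‖y‖ = 1) (hz : ‖z‖ = 1) :
    Real.cos (angle x y + angle y z) ≤ ⟪x, z⟫ := by
  set p := ⟪x, y⟫ with hp
  set q := ⟪y, z⟫ with hq
  have hca : Real.cos (angle x y) = p := by rw [cos_angle, hx, hy]; simp [hp]
  have hcb : Real.cos (angle y z) = q := by rw [cos_angle, hy, hz]; simp [hq]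
  have hsa : Real.sin (angle x y) = Real.sqrt (1 - p ^ 2) := by
    rw [sin_eq_sqrt_one_sub_cos_sq (angle_nonneg _ _) (angle_le_pi _ _), hca]
  have hsb : Real.sin (angle y z) = Real.sqrt (1 - q ^ 2) := by
    rw [sin_eq_sqrt_one_sub_cos_sq (angle_nonneg _ _) (angle_le_pi _ _), hcb]
  set u := x - p • y with hu
  set w := z - q • y with hw
  have hyy : ⟪y, y⟫ = (1:ℝ) := by
    rw [real_inner_self_eq_norm_sq, hy]; norm_num
  have hxx : ⟪x, x⟫ = (1:ℝ) := by
    rw [real_inner_self_eq_norm_sq, hx]; norm_num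
  have hzz : ⟪z, z⟫ = (1:ℝ) := by
    rw [real_inner_self_eq_norm_sq, hz]; norm_num
  have hnu : ‖u‖ = Real.sqrt (1 - p ^ 2) := by
    have : ⟪u, u⟫ = 1 - p ^ 2 := by
      simp only [hu, inner_sub_left, inner_sub_right, real_inner_smul_left,
        real_inner_smul_right, hyy, hxx, ← hp]
      rw [real_inner_comm x y]; ring
    rw [← Real.sqrt_sq (norm_nonneg u), ← real_inner_self_eq_norm_sq, this]
  have hnw : ‖w‖ = Real.sqrt (1 - q ^ 2) := by
    have : ⟪w, w⟫ = 1 - q ^ 2 := by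
      simp only [hw, inner_sub_left, inner_sub_right, real_inner_smul_left,
        real_inner_smul_right, hyy, hzz, ← hq]
      rw [real_inner_comm y z]; ring
    rw [← Real.sqrt_sq (norm_nonneg w), ← real_inner_self_eq_norm_sq, this]
  have hdecomp : ⟪x, z⟫ = p * q + ⟪u, w⟫ := by
    simp only [hu, hw, inner_sub_left, inner_sub_right, real_inner_smul_left,
      real_inner_smul_right, hyy, real_inner_comm y z, ← hp, ← hq]
    ring
  have hCS : -(‖u‖ * ‖w‖) ≤ ⟪u, w⟫ := by
    have := abs_real_inner_le_norm u w
    cases abs_le.1 this with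
    | intro h1 h2 => linarith
  rw [Real.cos_add, hca, hcb, hsa, hsb, hdecomp]
  have : Real.sqrt (1 - p ^ 2) * Real.sqrt (1 - q ^ 2) = ‖u‖ * ‖w‖ := by
    rw [hnu, hnw]
  linarith [this ▸ hCS]

private lemma angle_triangle_aux (x y z : V) : angle x z ≤ angle x y + angle y z := by
  by_cases hx : x = 0
  · subst hx
    simp only [angle_zero_left]
    linarith [angle_nonneg y z]
  by_cases hz : z = 0
  · subst hz
    simp only [angle_zero_right]
    linarith [angle_nonneg x y]
  by_cases hy : y = 0
  · subst hy
    simp only [angle_zero_left, angle_zero_right]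
    linarith [angle_le_pi x z]
  by_cases hab : π ≤ angle x y + angle y z
  · linarith [angle_le_pi x z]
  push_neg at hab
  set x' := ‖x‖⁻¹ • x with hx'
  set y' := ‖y‖⁻¹ • y with hy'
  set z' := ‖z‖⁻¹ • z with hz'
  have hnx : ‖x'‖ = 1 := norm_smul_inv_norm hx
  have hny : ‖y'‖ = 1 := norm_smul_inv_norm hy
  have hnz : ‖z'‖ = 1 := norm_smul_inv_norm hz
  have hpx : (0:ℝ) < ‖x‖⁻¹ := inv_pos.2 (norm_pos_iff.2 hx)
  have hpy : (0:ℝ) < ‖y‖⁻¹ := inv_pos.2 (norm_pos_iff.2 hy)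
  have hpz : (0:ℝ) < ‖z‖⁻¹ := inv_pos.2 (norm_pos_iff.2 hz)
  have e1 : angle x' y' = angle x y := by
    rw [angle_smul_left_of_pos _ _ hpx, angle_smul_right_of_pos _ _ hpy]
  have e2 : angle y' z' = angle y z := by
    rw [angle_smul_left_of_pos _ _ hpy, angle_smul_right_of_pos _ _ hpz]
  have e3 : angle x' z' = angle x z := by
    rw [angle_smul_left_of_pos _ _ hpx, angle_smul_right_of_pos _ _ hpz]
  have key : Real.cos (angle x y + angle y z) ≤ Real.cos (angle x z) := by
    have := aux_inner_ge hnx hny hnz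
    rw [e1, e2] at this
    have hcz : Real.cos (angle x' z') = ⟪x', z'⟫ := by
      rw [cos_angle, hnx, hnz]; simp
    rw [← e3, hcz]
    exact this
  by_contra hcon
  push_neg at hcon
  have := Real.strictAntiOn_cos
    ⟨by linarith [angle_nonneg x y, angle_nonneg y z], hab.le⟩
    ⟨angle_nonneg x z, angle_le_pi x z⟩ hcon
  linarith

private lemma angle_add_le_arcsin {a b : V} (ha : a ≠ 0) {c : ℝ} (hc0 : 0 ≤ c) (hc1 : c < 1)
    (h : ‖b‖ ≤ c * ‖a‖) : angle a (a + b) ≤ Real.arcsin c := by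
  have hna : (0:ℝ) < ‖a‖ := norm_pos_iff.2 ha
  set s := ⟪a, b⟫ with hs
  have hsabs : |s| ≤ ‖a‖ * ‖b‖ := abs_real_inner_le_norm a b
  have hinab : ⟪a, a + b⟫ = ‖a‖ ^ 2 + s := by
    rw [inner_add_right, real_inner_self_eq_norm_sq]
  have hnab_sq : ‖a + b‖ ^ 2 = ‖a‖ ^ 2 + 2 * s + ‖b‖ ^ 2 := by
    rw [← real_inner_self_eq_norm_sq, inner_add_left, inner_add_right, inner_add_right,
      real_inner_self_eq_norm_sq, real_inner_self_eq_norm_sq]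
    rw [real_inner_comm a b]; ring
  have habne : a + b ≠ 0 := by
    intro hab
    have : ‖b‖ = ‖a‖ := by
      have : b = -a := by rw [eq_neg_iff_add_eq_zero, add_comm]; exact hab
      rw [this, norm_neg]
    nlinarith
  have hnab : (0:ℝ) < ‖a + b‖ := norm_pos_iff.2 habne
  have hinpos : (0:ℝ) ≤ ⟪a, a + b⟫ := by
    rw [hinab]
    nlinarith [abs_le.1 hsabs]
  have hcos : Real.cos (angle a (a + b)) = ⟪a, a + b⟫ / (‖a‖ * ‖a + b‖) := cos_angle _ _
  have hcosnn : 0 ≤ Real.cos (angle a (a + b)) := by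
    rw [hcos]; positivity
  have hle2 : angle a (a + b) ≤ π / 2 := by
    by_contra hcon
    push_neg at hcon
    have := Real.strictAntiOn_cos ⟨by positivity, le_of_lt (lt_of_lt_of_le hcon (angle_le_pi _ _))⟩
      ⟨angle_nonneg _ _, angle_le_pi _ _⟩ hcon
    rw [Real.cos_pi_div_two] at this
    linarith
  have hcossq : 1 - c ^ 2 ≤ Real.cos (angle a (a + b)) ^ 2 := by
    rw [hcos, div_pow]
    rw [le_div_iff₀ (by positivity)]
    rw [hinab, mul_pow, hnab_sq]
    have hb2 : ‖b‖ ^ 2 ≤ c ^ 2 * ‖a‖ ^ 2 := by nlinarith [norm_nonneg b]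
    nlinarith [sq_nonneg (s + ‖b‖ ^ 2), abs_le.1 hsabs, sq_nonneg ‖b‖,
      sq_nonneg ‖a + b‖, hb2, sq_nonneg (‖a‖ * ‖a + b‖)]
  have hsinnn : 0 ≤ Real.sin (angle a (a + b)) :=
    Real.sin_nonneg_of_nonneg_of_le_pi (angle_nonneg _ _) (angle_le_pi _ _)
  have hsinle : Real.sin (angle a (a + b)) ≤ c := by
    have hsq := Real.sin_sq_add_cos_sq (angle a (a + b))
    nlinarith
  calc angle a (a + b) = Real.arcsin (Real.sin (angle a (a + b))) :=
        (Real.arcsin_sin (by linarith [angle_nonneg a (a+b), Real.pi_pos]) hle2).symm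
    _ ≤ Real.arcsin c := Real.monotone_arcsin hsinle

end AngleAux

section DerivAux

open Filter Function

variable {E : Type*} [NormedAddCommGroup E] [NormedSpace ℝ E]
variable {F : Type*} [NormedAddCommGroup F] [NormedSpace ℝ F]

private lemma fderiv_bound_of_lip {f g : E → F} {c : ℝ}
    (hf : Differentiable ℝ f) (hg : Differentiable ℝ g)
    (hlip : ∀ v₀ v₁ : E, ‖g v₁ - g v₀‖ ≤ c * ‖f v₁ - f v₀‖) (x : E) (v : E) :
    ‖fderiv ℝ g x v‖ ≤ c * ‖fderiv ℝ f x v‖ := by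
  have hline : HasDerivAt (fun t : ℝ => x + t • v) v 0 := by
    simpa using ((hasDerivAt_id (0:ℝ)).smul_const v).const_add x
  have hF : HasDerivAt (fun t : ℝ => f (x + t • v)) (fderiv ℝ f x v) 0 := by
    have := (hf _).hasFDerivAt.comp_hasDerivAt 0 hline
    simpa [Function.comp_def] using this
  have hG : HasDerivAt (fun t : ℝ => g (x + t • v)) (fderiv ℝ g x v) 0 := by
    have := (hg _).hasFDerivAt.comp_hasDerivAt 0 hline
    simpa [Function.comp_def] using this
  rw [hasDerivAt_iff_tendsto_slope] at hF hG
  have htF : Tendsto (fun t => c * ‖slope (fun t : ℝ => f (x + t • v)) 0 t‖)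
      (nhdsWithin 0 {(0:ℝ)}ᶜ) (nhds (c * ‖fderiv ℝ f x v‖)) :=
    ((continuous_norm.tendsto _).comp hF).const_mul c
  have htG : Tendsto (fun t => ‖slope (fun t : ℝ => g (x + t • v)) 0 t‖)
      (nhdsWithin 0 {(0:ℝ)}ᶜ) (nhds ‖fderiv ℝ g x v‖) :=
    (continuous_norm.tendsto _).comp hG
  refine le_of_tendsto_of_tendsto' htG htF ?_
  intro t
  simp only [slope_def_module, sub_zero, zero_smul, add_zero]
  rw [norm_smul, norm_smul]
  calc ‖t⁻¹‖ * ‖g (x + t • v) - g x‖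
      ≤ ‖t⁻¹‖ * (c * ‖f (x + t • v) - f x‖) :=
        mul_le_mul_of_nonneg_left (hlip x (x + t • v)) (norm_nonneg _)
    _ = c * (‖t⁻¹‖ * ‖f (x + t • v) - f x‖) := by ring

private lemma inverse_exists [FiniteDimensional ℝ E] (f g fi : E → E)
    (hfC : ContDiff ℝ 1 f) (hgC : ContDiff ℝ 1 g) (hfiC : ContDiff ℝ 1 fi)
    (hfil : LeftInverse fi f) (hfir : RightInverse fi f)
    {c : ℝ} (hc0 : 0 ≤ c) (hc1 : c < 1)
    (hlip : ∀ v₀ v₁ : E, ‖g v₁ - g v₀‖ ≤ c * ‖f v₁ - f v₀‖) :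
    ∃ k, ContDiff ℝ 1 k ∧ LeftInverse k (f + g) ∧ RightInverse k (f + g) := by
  set h : E → E := f + g with hh
  have hhapp : ∀ x, h x = f x + g x := fun x => rfl
  have hhC : ContDiff ℝ 1 h := hfC.add hgC
  have hfinj : Injective f := hfil.injective
  have hinj : Injective h := by
    intro x₁ x₂ hx
    have he : f x₁ - f x₂ = g x₂ - g x₁ := by
      have h' : f x₁ + g x₁ = f x₂ + g x₂ := hx
      rw [sub_eq_sub_iff_add_eq_add, h']
      exact add_comm _ _
    have h1 : ‖f x₁ - f x₂‖ ≤ c * ‖f x₁ - f x₂‖ := by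
      calc ‖f x₁ - f x₂‖ = ‖g x₂ - g x₁‖ := by rw [he]
        _ ≤ c * ‖f x₂ - f x₁‖ := by simpa using hlip x₁ x₂
        _ = c * ‖f x₁ - f x₂‖ := by rw [norm_sub_rev]
    have : f x₁ = f x₂ := by
      by_contra hne
      have : 0 < ‖f x₁ - f x₂‖ := norm_sub_pos_iff.2 hne
      nlinarith
    exact hfinj this
  have hsurj : Surjective h := by
    intro y
    set Φ : E → E := fun z => y - g (fi z) with hΦ
    have hΦlip : LipschitzWith c.toNNReal Φ := by
      apply LipschitzWith.of_dist_le_mul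
      intro z₁ z₂
      simp only [hΦ, dist_eq_norm]
      have : y - g (fi z₁) - (y - g (fi z₂)) = g (fi z₂) - g (fi z₁) := by abel
      rw [this, Real.coe_toNNReal _ hc0]
      calc ‖g (fi z₂) - g (fi z₁)‖ ≤ c * ‖f (fi z₂) - f (fi z₁)‖ := hlip _ _
        _ = c * ‖z₂ - z₁‖ := by rw [hfir z₂, hfir z₁]
        _ = c * ‖z₁ - z₂‖ := by rw [norm_sub_rev]
    have hcontr : ContractingWith c.toNNReal Φ := by
      constructor
      · exact_mod_cast (Real.toNNReal_lt_one).2 hc1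
      · exact hΦlip
    have : Nonempty E := ⟨0⟩
    set z := hcontr.fixedPoint Φ with hz
    have hfix : Φ z = z := hcontr.fixedPoint_isFixedPt
    refine ⟨fi z, ?_⟩
    have : y - g (fi z) = z := hfix
    rw [hhapp, hfir z]
    exact eq_sub_iff_add_eq.1 this.symm
  have hfd : Differentiable ℝ f := hfC.differentiable one_ne_zero
  have hgd : Differentiable ℝ g := hgC.differentiable one_ne_zero
  have hfid : Differentiable ℝ fi := hfiC.differentiable one_ne_zero
  have hDf_inj : ∀ x, Injective (fderiv ℝ f x) := by
    intro x
    have hcomp : (fderiv ℝ fi (f x)).comp (fderiv ℝ f x) = ContinuousLinearMap.id ℝ E := by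
      have h1 : fderiv ℝ (fi ∘ f) x = (fderiv ℝ fi (f x)).comp (fderiv ℝ f x) :=
        fderiv_comp x (hfid _) (hfd _)
      have h2 : fi ∘ f = id := funext hfil
      rw [h2] at h1
      rw [← h1, fderiv_id]
    intro v₁ v₂ hv
    have := congrArg (fderiv ℝ fi (f x)) hv
    have e1 := congrFun (congrArg DFunLike.coe hcomp) v₁
    have e2 := congrFun (congrArg DFunLike.coe hcomp) v₂
    simp only [ContinuousLinearMap.coe_comp', Function.comp_apply,
      ContinuousLinearMap.coe_id', id_eq] at e1 e2
    rw [← e1, ← e2]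
    exact this
  have hDh_bij : ∀ x, Bijective (fderiv ℝ h x) := by
    intro x
    have hDh : fderiv ℝ h x = fderiv ℝ f x + fderiv ℝ g x := by
      have : h = fun y => f y + g y := rfl
      rw [this, fderiv_fun_add (hfd x) (hgd x)]
    have hinj' : Injective (fderiv ℝ h x) := by
      intro v₁ v₂ hv
      have hv0 : fderiv ℝ h x (v₁ - v₂) = 0 := by
        rw [map_sub, hv, sub_self]
      have hkey : fderiv ℝ f x (v₁ - v₂) = 0 := by
        have hb := fderiv_bound_of_lip hfd hgd hlip x (v₁ - v₂)
        have : fderiv ℝ f x (v₁ - v₂) + fderiv ℝ g x (v₁ - v₂) = 0 := by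
          rw [hDh] at hv0
          simpa using hv0
        have heq : fderiv ℝ g x (v₁ - v₂) = -(fderiv ℝ f x (v₁ - v₂)) :=
          eq_neg_of_add_eq_zero_right this
        rw [heq, norm_neg] at hb
        by_contra hne
        have : 0 < ‖fderiv ℝ f x (v₁ - v₂)‖ := norm_pos_iff.2 hne
        nlinarith
      have h0 : v₁ - v₂ = 0 :=
        hDf_inj x (by simp [hkey] : fderiv ℝ f x (v₁ - v₂) = fderiv ℝ f x 0)
      exact sub_eq_zero.1 h0
    have : Surjective (fderiv ℝ h x) := by
      have := (LinearMap.injective_iff_surjective (f := (fderiv ℝ h x : E →ₗ[ℝ] E))).1 hinj'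
      exact this
    exact ⟨hinj', this⟩
  have hhd : Differentiable ℝ h := hhC.differentiable one_ne_zero
  set k := Function.invFun h with hk
  have hkl : LeftInverse k h := Function.leftInverse_invFun hinj
  have hkr : RightInverse k h := Function.rightInverse_invFun hsurj
  refine ⟨k, ?_, hkl, hkr⟩
  rw [contDiff_iff_contDiffAt]
  intro y
  set x := k y with hx
  have hyx : h x = y := hkr y
  obtain ⟨e, he⟩ : ∃ e : E ≃L[ℝ] E, (e : E →L[ℝ] E) = fderiv ℝ h x := by
    have hb := hDh_bij x
    let le := LinearEquiv.ofBijective ((fderiv ℝ h x) : E →ₗ[ℝ] E) hb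
    exact ⟨le.toContinuousLinearEquiv, by ext v; rfl⟩
  have hca : ContDiffAt ℝ 1 h x := hhC.contDiffAt
  have hfd' : HasFDerivAt h (e : E →L[ℝ] E) x := by
    rw [he]; exact (hhd x).hasFDerivAt
  have hli := hca.to_localInverse (f' := e) hfd' one_ne_zero
  have hev : ∀ᶠ y' in nhds (h x), h ((hca.localInverse hfd' one_ne_zero) y') = y' :=
    (hca.hasStrictFDerivAt' hfd' one_ne_zero).eventually_right_inverse
  have hev2 : k =ᶠ[nhds (h x)] hca.localInverse hfd' one_ne_zero := by
    filter_upwards [hev] with y' hy'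
    conv_lhs => rw [← hy']
    exact hkl _
  rw [← hyx]
  exact hli.congr_of_eventuallyEq hev2

end DerivAux

/-- The twist of a function `f : ℝⁿ → ℝⁿ` (sup of angles between chords). -/
noncomputable def twFun {n : ℕ}
    (f : EuclideanSpace ℝ (Fin n) → EuclideanSpace ℝ (Fin n)) : ℝ :=
  sSup {a | ∃ v₀ v₁ : EuclideanSpace ℝ (Fin n), v₀ ≠ v₁ ∧ f v₀ ≠ f v₁ ∧
    a = angle (v₁ - v₀) (f v₁ - f v₀)}

/-- `f ∈ F_θ`: a `C¹` bijection with `C¹` inverse, twist `< θ`, equal to a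
translation outside a bounded set. -/
def memF {n : ℕ} (θ : ℝ)
    (f : EuclideanSpace ℝ (Fin n) → EuclideanSpace ℝ (Fin n)) : Prop :=
  ContDiff ℝ 1 f ∧
  (∃ g, ContDiff ℝ 1 g ∧ Function.LeftInverse g f ∧ Function.RightInverse g f) ∧
  twFun f < θ ∧
  ∃ r c, 0 < r ∧ ∀ x : EuclideanSpace ℝ (Fin n), r ≤ ‖x‖ → f x = c + x

theorem small_change_stays_in_F {n : ℕ} (θ θhat : ℝ)
    (f g : EuclideanSpace ℝ (Fin n) → EuclideanSpace ℝ (Fin n))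
    (hf : memF θ f) (hθ1 : twFun f < θhat) (hθ2 : θhat < θ)
    (hθ3 : θ - θhat < π / 2)
    (hg : ContDiff ℝ 1 g)
    (r' : ℝ) (hsupp : ∀ x : EuclideanSpace ℝ (Fin n), r' ≤ ‖x‖ → g x = 0)
    (hlip : ∀ v₀ v₁ : EuclideanSpace ℝ (Fin n),
      ‖g v₁ - g v₀‖ ≤ (2 / π) * (θ - θhat) * ‖f v₁ - f v₀‖) :
    memF θ (f + g) ∧
    ∀ (finv kinv : EuclideanSpace ℝ (Fin n) → EuclideanSpace ℝ (Fin n)),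
      Function.LeftInverse finv f → Function.RightInverse finv f →
      Function.LeftInverse kinv (f + g) → Function.RightInverse kinv (f + g) →
      ∀ (G L : ℝ), (∀ x, ‖g x‖ ≤ G) → (∀ y, ‖fderiv ℝ finv y‖ ≤ L) →
        (∀ x, ‖f x - (f + g) x‖ ≤ G * max 1 L) ∧
        (∀ y, ‖finv y - kinv y‖ ≤ G * max 1 L) := by
  obtain ⟨hfC, ⟨fi, hfiC, hfil, hfir⟩, htwf, r, cc, hr, htrans⟩ := hf
  have hπ : (0:ℝ) < π := Real.pi_pos
  have hd0 : 0 < θ - θhat := by linarith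
  set c : ℝ := (2 / π) * (θ - θhat) with hc
  have hc0 : 0 ≤ c := by positivity
  have hc1 : c < 1 := by
    have : (2 / π) * (θ - θhat) < (2 / π) * (π / 2) := by
      apply mul_lt_mul_of_pos_left hθ3 (by positivity)
    rw [hc]
    calc (2 / π) * (θ - θhat) < (2 / π) * (π / 2) := this
      _ = 1 := by field_simp
  have harc : Real.arcsin c ≤ θ - θhat := by
    have hj : c ≤ Real.sin (θ - θhat) := Real.mul_le_sin hd0.le hθ3.le
    calc Real.arcsin c ≤ Real.arcsin (Real.sin (θ - θhat)) := Real.monotone_arcsin hj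
      _ = θ - θhat := Real.arcsin_sin (by linarith) hθ3.le
  have hfinj : Function.Injective f := hfil.injective
  -- twist bound
  have htw_nonneg : 0 ≤ twFun f := by
    apply Real.sSup_nonneg
    rintro a ⟨v₀, v₁, -, -, rfl⟩
    exact angle_nonneg _ _
  have hbdd : BddAbove {a | ∃ v₀ v₁ : EuclideanSpace ℝ (Fin n), v₀ ≠ v₁ ∧ f v₀ ≠ f v₁ ∧
      a = angle (v₁ - v₀) (f v₁ - f v₀)} := by
    refine ⟨π, ?_⟩
    rintro a ⟨v₀, v₁, -, -, rfl⟩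
    exact angle_le_pi _ _
  have htw2 : twFun (f + g) ≤ twFun f + Real.arcsin c := by
    apply Real.sSup_le
    · rintro a ⟨v₀, v₁, hv, hfv, rfl⟩
      have hΔf : f v₁ - f v₀ ≠ 0 := sub_ne_zero.2 fun hh => hv (hfinj hh.symm)
      have h1 : angle (v₁ - v₀) (f v₁ - f v₀) ≤ twFun f := by
        apply le_csSup hbdd
        exact ⟨v₀, v₁, hv, fun hh => hΔf (by rw [hh, sub_self]), rfl⟩
      have hsum : (f + g) v₁ - (f + g) v₀ = (f v₁ - f v₀) + (g v₁ - g v₀) := by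
        simp only [Pi.add_apply]; abel
      have h2 : angle (f v₁ - f v₀) ((f + g) v₁ - (f + g) v₀) ≤ Real.arcsin c := by
        rw [hsum]
        exact angle_add_le_arcsin hΔf hc0 hc1 (hlip v₀ v₁)
      calc angle (v₁ - v₀) ((f + g) v₁ - (f + g) v₀)
          ≤ angle (v₁ - v₀) (f v₁ - f v₀)
            + angle (f v₁ - f v₀) ((f + g) v₁ - (f + g) v₀) := angle_triangle_aux _ _ _
        _ ≤ twFun f + Real.arcsin c := add_le_add h1 h2
    · have := Real.arcsin_nonneg.2 hc0
      linarith
  have htwlt : twFun (f + g) < θ := by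
    calc twFun (f + g) ≤ twFun f + Real.arcsin c := htw2
      _ ≤ twFun f + (θ - θhat) := by linarith
      _ < θhat + (θ - θhat) := by linarith
      _ = θ := by ring
  -- inverse
  obtain ⟨k, hkC, hkl, hkr⟩ := inverse_exists f g fi hfC hg hfiC hfil hfir hc0 hc1 hlip
  constructor
  · refine ⟨hfC.add hg, ⟨k, hkC, hkl, hkr⟩, htwlt, max r r', cc, lt_of_lt_of_le hr (le_max_left _ _), ?_⟩
    intro x hx
    rw [Pi.add_apply, htrans x (le_trans (le_max_left _ _) hx),
      hsupp x (le_trans (le_max_right _ _) hx), add_zero]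
  · intro finv kinv hfl hfr hkl' hkr' G L hG hL
    have hfinv_eq : finv = fi := by
      funext y
      calc finv y = finv (f (fi y)) := by rw [hfir y]
        _ = fi y := hfl _
    have hfinvC : ContDiff ℝ 1 finv := hfinv_eq ▸ hfiC
    have hL0 : 0 ≤ L := le_trans (norm_nonneg _) (hL 0)
    have hG0 : 0 ≤ G := le_trans (norm_nonneg _) (hG 0)
    constructor
    · intro x
      have : f x - (f + g) x = -(g x) := by simp only [Pi.add_apply]; abel
      rw [this, norm_neg]
      calc ‖g x‖ ≤ G := hG x
        _ = G * 1 := (mul_one G).symm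
        _ ≤ G * max 1 L := mul_le_mul_of_nonneg_left (le_max_left _ _) hG0
    · intro y
      set x := kinv y with hxdef
      have hxy : f x + g x = y := hkr' y
      have hlipf : ∀ a b : EuclideanSpace ℝ (Fin n), ‖finv a - finv b‖ ≤ L * ‖a - b‖ := by
        intro a b
        exact convex_univ.norm_image_sub_le_of_norm_fderiv_le
          (fun z _ => (hfinvC.differentiable one_ne_zero z))
          (fun z _ => hL z) (Set.mem_univ b) (Set.mem_univ a)
      calc ‖finv y - kinv y‖ = ‖finv (f x + g x) - finv (f x)‖ := by
            rw [hxy, hfl x]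
        _ ≤ L * ‖(f x + g x) - f x‖ := hlipf _ _
        _ = L * ‖g x‖ := by rw [add_sub_cancel_left]
        _ ≤ L * G := mul_le_mul_of_nonneg_left (hG x) hL0
        _ ≤ max 1 L * G := mul_le_mul_of_nonneg_right (le_max_right 1 L) hG0
        _ = G * max 1 L := mul_comm _ _
end

section
/- There exist ℵ₁-dense sets D, E ⊆ ℝ² such that no bijection f : D → E satisfies tw(f) ≤ π/2. Concretely: let E = Ê × Ê for Ê an ℵ₁-dense subset of ℝ, and D = ⋃_{n∈ω} D̂_n × {y_n} ℵ₁-dense with each D̂_n ⊆ ℝ; then every injection f : D → E with tw(f) ≤ π/2 fails to be surjective. -/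
open Real InnerProductGeometry Cardinal

/-- `A` is `ℵ₁`-dense: every nonempty open set meets `A` in exactly `ℵ₁` points. -/
def Aleph1Dense {n : ℕ} (A : Set (EuclideanSpace ℝ (Fin n))) : Prop :=
  ∀ U : Set (EuclideanSpace ℝ (Fin n)), IsOpen U → U.Nonempty →
    #(↥(A ∩ U)) = aleph 1

section Aux

open Set

noncomputable def pt (x y : ℝ) : EuclideanSpace ℝ (Fin 2) := WithLp.toLp 2 ![x, y]

@[simp] lemma pt_zero (x y : ℝ) : pt x y 0 = x := rfl
@[simp] lemma pt_one (x y : ℝ) : pt x y 1 = y := rfl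

lemma pt_inj {x y x' y' : ℝ} (h : pt x y = pt x' y') : x = x' ∧ y = y' :=
  ⟨congrArg (fun p : EuclideanSpace ℝ (Fin 2) => p 0) h,
    congrArg (fun p : EuclideanSpace ℝ (Fin 2) => p 1) h⟩

lemma eq_pt (p : EuclideanSpace ℝ (Fin 2)) : p = pt (p 0) (p 1) := by
  ext i; fin_cases i <;> rfl

lemma inner_nonneg_of_angle_le {V : Type*} [NormedAddCommGroup V] [InnerProductSpace ℝ V]
    {x y : V} (h : angle x y ≤ π / 2) : (0:ℝ) ≤ inner ℝ x y := by
  rw [← cos_angle_mul_norm_mul_norm]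
  exact mul_nonneg (Real.cos_nonneg_of_mem_Icc
    ⟨by linarith [angle_nonneg x y, Real.pi_pos], h⟩) (by positivity)

lemma inner_two (p q : EuclideanSpace ℝ (Fin 2)) :
    (inner ℝ p q : ℝ) = p 0 * q 0 + p 1 * q 1 := by
  simp [PiLp.inner_apply, Fin.sum_univ_two, RCLike.inner_apply, mul_comm]

lemma countable_multifiber {g : ℝ → ℝ} {S : Set ℝ} (hg : MonotoneOn g S) :
    {v : ℝ | ∃ a ∈ S, ∃ b ∈ S, a < b ∧ g a = v ∧ g b = v}.Countable := by
  set B := {v : ℝ | ∃ a ∈ S, ∃ b ∈ S, a < b ∧ g a = v ∧ g b = v} with hB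
  have h : ∀ v ∈ B, ∃ a b : ℝ, a ∈ S ∧ b ∈ S ∧ a < b ∧ g a = v ∧ g b = v := by
    intro v hv
    obtain ⟨a, ha, b, hb, h1, h2, h3⟩ := hv
    exact ⟨a, b, ha, hb, h1, h2, h3⟩
  choose! a b haS hbS hab hga hgb using h
  have key : ∀ v ∈ B, ∀ w ∈ B, a v ≤ a w → ∀ x : ℝ,
      x ∈ Ioo (a v) (b v) → x ∈ Ioo (a w) (b w) → v = w := by
    intro v hv w hw hle x hx1 hx2
    have h1 : a w < b v := lt_trans hx2.1 hx1.2
    have h2 : g (a w) = v := le_antisymm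
      (by rw [← hgb v hv]; exact hg (haS w hw) (hbS v hv) h1.le)
      (by rw [← hga v hv]; exact hg (haS v hv) (haS w hw) hle)
    rw [← h2, hga w hw]
  have hpd : B.PairwiseDisjoint (fun v => Ioo (a v) (b v)) := by
    intro v hv w hw hne
    rw [Function.onFun, Set.disjoint_left]
    intro x hxv hxw
    rcases le_total (a v) (a w) with hle | hle
    · exact hne (key v hv w hw hle x hxv hxw)
    · exact hne ((key w hw v hv hle x hxw hxv).symm)
  exact hpd.countable_of_isOpen (fun v _ => isOpen_Ioo)
    (fun v hv => Set.nonempty_Ioo.2 (hab v hv))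

lemma exists_good_set : ∃ Eh : Set ℝ, #↥Eh ≤ aleph 1 ∧
    ∀ a b : ℝ, a < b → aleph 1 ≤ #↥(Eh ∩ Ioo a b) := by
  obtain ⟨X, hXsub, hXcard⟩ : ∃ X ⊆ Ioo (0:ℝ) 1, #X = aleph 1 :=
    Cardinal.le_mk_iff_exists_subset.1
      (by rw [Cardinal.mk_Ioo_real one_pos]; exact Cardinal.aleph_one_le_continuum)
  refine ⟨⋃ p : ℚ × ℚ, (fun x : ℝ => (p.1:ℝ) + (p.2:ℝ) * x) '' X, ?_, ?_⟩
  · calc #↥(⋃ p : ℚ × ℚ, (fun x : ℝ => (p.1:ℝ) + (p.2:ℝ) * x) '' X)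
        ≤ #(ℚ × ℚ) * ⨆ p : ℚ × ℚ, #↥((fun x : ℝ => (p.1:ℝ) + (p.2:ℝ) * x) '' X) :=
          Cardinal.mk_iUnion_le _
      _ ≤ ℵ₀ * aleph 1 := by
          apply mul_le_mul'
          · simp
          · exact ciSup_le fun p => (Cardinal.mk_image_le).trans_eq hXcard
      _ = aleph 1 := Cardinal.mul_eq_right (aleph0_le_aleph 1) (aleph0_le_aleph 1)
          Cardinal.aleph0_ne_zero
  · intro a b hab
    obtain ⟨q, hq1, hq2⟩ := exists_rat_btwn hab
    obtain ⟨r, hr1, hr2⟩ := exists_rat_btwn (sub_pos.2 hq2)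
    have hrpos : (0:ℝ) < (r:ℝ) := by exact_mod_cast hr1
    have hsub : (fun x : ℝ => (q:ℝ) + (r:ℝ) * x) '' X ⊆
        (⋃ p : ℚ × ℚ, (fun x : ℝ => (p.1:ℝ) + (p.2:ℝ) * x) '' X) ∩ Ioo a b := by
      rintro _ ⟨x, hx, rfl⟩
      obtain ⟨hx0, hx1⟩ := hXsub hx
      refine ⟨Set.mem_iUnion.2 ⟨(q, r), Set.mem_image_of_mem _ hx⟩, ?_, ?_⟩
      · simp only
        nlinarith
      · simp only
        nlinarith
    calc aleph 1 = #X := hXcard.symm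
      _ = #↥((fun x : ℝ => (q:ℝ) + (r:ℝ) * x) '' X) := by
          refine (Cardinal.mk_image_eq ?_).symm
          intro u w huw
          simpa [hrpos.ne'] using huw
      _ ≤ _ := Cardinal.mk_le_mk_of_subset hsub

lemma box_mem {pc : EuclideanSpace ℝ (Fin 2)} {ε x y : ℝ} (hε : 0 < ε)
    (hx : |x - pc 0| < ε/2) (hy : |y - pc 1| < ε/2) : pt x y ∈ Metric.ball pc ε := by
  rw [Metric.mem_ball, EuclideanSpace.dist_eq, Fin.sum_univ_two, Real.sqrt_lt' hε]
  rw [Real.dist_eq, Real.dist_eq, pt_zero, pt_one]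
  nlinarith [sq_abs (x - pc 0), sq_abs (y - pc 1), abs_nonneg (x - pc 0), abs_nonneg (y - pc 1)]

lemma aleph1Dense_prod {Eh T : Set ℝ}
    (hup : #↥Eh ≤ aleph 1) (hIoo : ∀ a b : ℝ, a < b → aleph 1 ≤ #↥(Eh ∩ Ioo a b))
    (hTcard : #↥T ≤ aleph 1) (hTd : ∀ c d : ℝ, c < d → (T ∩ Ioo c d).Nonempty) :
    Aleph1Dense {p : EuclideanSpace ℝ (Fin 2) | p 0 ∈ Eh ∧ p 1 ∈ T} := by
  intro U hU hne
  set A := {p : EuclideanSpace ℝ (Fin 2) | p 0 ∈ Eh ∧ p 1 ∈ T} with hA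
  refine le_antisymm ?_ ?_
  · have hAcard : #↥A ≤ aleph 1 := by
      have hF : Function.Injective (fun p : ↥A => ((⟨p.1 0, p.2.1⟩ : ↥Eh), (⟨p.1 1, p.2.2⟩ : ↥T))) := by
        intro p p' hpp
        have h0 : p.1 0 = p'.1 0 := congrArg (fun z => (z.1 : ℝ)) hpp
        have h1 : p.1 1 = p'.1 1 := congrArg (fun z => (z.2 : ℝ)) hpp
        apply Subtype.ext
        rw [eq_pt p.1, eq_pt p'.1, h0, h1]
      calc #↥A ≤ #(↥Eh × ↥T) := Cardinal.mk_le_of_injective hF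
        _ = #↥Eh * #↥T := by simp
        _ ≤ aleph 1 * aleph 1 := mul_le_mul' hup hTcard
        _ = aleph 1 := Cardinal.mul_eq_self (aleph0_le_aleph 1)
    exact (Cardinal.mk_le_mk_of_subset Set.inter_subset_left).trans hAcard
  · obtain ⟨p, hp⟩ := hne
    obtain ⟨ε, hε, hball⟩ := Metric.isOpen_iff.1 hU p hp
    obtain ⟨t, htT, ht1, ht2⟩ := hTd (p 1 - ε/2) (p 1 + ε/2) (by linarith)
    have habs_t : |t - p 1| < ε/2 := abs_lt.2 ⟨by linarith, by linarith⟩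
    have hF : Function.Injective (fun x : ↥(Eh ∩ Ioo (p 0 - ε/2) (p 0 + ε/2)) =>
        (⟨pt x t, ⟨(x.2.1 : (x:ℝ) ∈ Eh), htT⟩,
          hball (box_mem hε (abs_lt.2 ⟨by linarith [x.2.2.1], by linarith [x.2.2.2]⟩) habs_t)⟩ :
          ↥(A ∩ U))) := by
      intro u w huw
      have h2 : pt (u:ℝ) t = pt (w:ℝ) t := congrArg Subtype.val huw
      exact Subtype.ext (pt_inj h2).1
    exact (hIoo _ _ (by linarith)).trans (Cardinal.mk_le_of_injective hF)

end Aux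

/-- There are `ℵ₁`-dense `D, E ⊆ ℝ²` such that no injection `f : D → E` with
`tw(f) ≤ π/2` is surjective onto `E`; in particular no bijection `f : D → E`
has `tw(f) ≤ π/2`. -/
theorem exists_aleph1Dense_no_small_twist_bijection :
    ∃ D E : Set (EuclideanSpace ℝ (Fin 2)), Aleph1Dense D ∧ Aleph1Dense E ∧
      ∀ f : EuclideanSpace ℝ (Fin 2) → EuclideanSpace ℝ (Fin 2),
        Set.InjOn f D → Set.MapsTo f D E →
        (∀ d₀ ∈ D, ∀ d₁ ∈ D, d₀ ≠ d₁ → f d₀ ≠ f d₁ →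
          angle (d₁ - d₀) (f d₁ - f d₀) ≤ π / 2) →
        f '' D ≠ E := by
  obtain ⟨Eh, hup, hIoo⟩ := exists_good_set
  have hE1 : aleph 1 ≤ #↥Eh :=
    (hIoo 0 1 one_pos).trans (Cardinal.mk_le_mk_of_subset Set.inter_subset_left)
  set Q : Set ℝ := Set.range ((↑) : ℚ → ℝ) with hQdef
  set D : Set (EuclideanSpace ℝ (Fin 2)) := {p | p 0 ∈ Eh ∧ p 1 ∈ Q} with hDdef
  set E : Set (EuclideanSpace ℝ (Fin 2)) := {p | p 0 ∈ Eh ∧ p 1 ∈ Eh} with hEdef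
  have hEhNe : ∀ c d : ℝ, c < d → (Eh ∩ Set.Ioo c d).Nonempty := by
    intro c d hcd
    have h1 := hIoo c d hcd
    rw [Set.nonempty_coe_sort.symm, ← Cardinal.mk_ne_zero_iff]
    intro h0
    have h2 : (0 : Cardinal) < aleph 1 :=
      (zero_le : (0 : Cardinal) ≤ ℵ₀).trans_lt Cardinal.aleph0_lt_aleph_one
    exact (h2.trans_le (h0 ▸ h1)).false
  refine ⟨D, E, ?_, ?_, ?_⟩
  · refine aleph1Dense_prod hup hIoo ?_ ?_
    · exact (Cardinal.mk_range_le).trans (by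
        rw [Cardinal.mk_denumerable]; exact aleph0_le_aleph 1)
    · intro c d hcd
      obtain ⟨q, h1, h2⟩ := exists_rat_btwn hcd
      exact ⟨q, ⟨q, rfl⟩, h1, h2⟩
  · exact aleph1Dense_prod hup hIoo hup hEhNe
  · intro f hinj hmaps htw heq
    -- monotonicity of the first coordinate along each horizontal line
    have mono : ∀ r : ℚ, MonotoneOn (fun s : ℝ => f (pt s (r:ℝ)) 0) Eh := by
      intro r s hs u hu hsu
      rcases eq_or_lt_of_le hsu with rfl | hlt
      · exact le_rfl
      have hds : pt s (r:ℝ) ∈ D := ⟨hs, ⟨r, rfl⟩⟩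
      have hdu : pt u (r:ℝ) ∈ D := ⟨hu, ⟨r, rfl⟩⟩
      have hne : pt s (r:ℝ) ≠ pt u (r:ℝ) := fun h => absurd (pt_inj h).1 hlt.ne
      by_cases hf : f (pt s (r:ℝ)) = f (pt u (r:ℝ))
      · exact absurd (hinj hds hdu hf) hne
      have hang := htw _ hds _ hdu hne hf
      have h0 := inner_nonneg_of_angle_le hang
      rw [inner_two] at h0
      have e1 : (pt u (r:ℝ) - pt s (r:ℝ)) 0 = u - s := rfl
      have e2 : (pt u (r:ℝ) - pt s (r:ℝ)) 1 = (r:ℝ) - (r:ℝ) := rfl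
      have e3 : (f (pt u (r:ℝ)) - f (pt s (r:ℝ))) 0
          = f (pt u (r:ℝ)) 0 - f (pt s (r:ℝ)) 0 := rfl
      rw [e1, e2, e3] at h0
      show f (pt s (r:ℝ)) 0 ≤ f (pt u (r:ℝ)) 0
      nlinarith [h0, sub_pos.2 hlt]
    -- the countable bad set
    set B : Set ℝ := ⋃ r : ℚ, {v : ℝ | ∃ a ∈ Eh, ∃ b ∈ Eh, a < b ∧
      f (pt a (r:ℝ)) 0 = v ∧ f (pt b (r:ℝ)) 0 = v} with hBdef
    have hBc : B.Countable := Set.countable_iUnion fun r => countable_multifiber (mono r)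
    obtain ⟨v, hvE, hvB⟩ : ∃ v, v ∈ Eh ∧ v ∉ B := by
      by_contra h
      push_neg at h
      have hsub : Eh ⊆ B := fun w hw => h w hw
      have : #↥Eh ≤ ℵ₀ := Cardinal.le_aleph0_iff_set_countable.2 (hBc.mono hsub)
      exact Cardinal.aleph0_lt_aleph_one.not_ge (hE1.trans this)
    -- choose preimages of the vertical line {v} × Eh
    have hpre : ∀ y ∈ Eh, ∃ (x : ℝ) (r : ℚ), x ∈ Eh ∧ f (pt x (r:ℝ)) = pt v y := by
      intro y hy
      have hvy : pt v y ∈ E := ⟨hvE, hy⟩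
      rw [← heq] at hvy
      obtain ⟨d, hd, hfd⟩ := hvy
      obtain ⟨hd0, r, hr⟩ := hd
      refine ⟨d 0, r, hd0, ?_⟩
      have hde : pt (d 0) ((r:ℝ)) = d := by rw [hr]; exact (eq_pt d).symm
      rw [hde]; exact hfd
    choose! x r hxE hfx using hpre
    have hrinj : Set.InjOn r Eh := by
      intro y hy y' hy' hrr
      by_contra hyy
      have hxne : x y ≠ x y' := by
        intro hxx
        have hpp : pt (x y) ((r y : ℝ)) = pt (x y') ((r y' : ℝ)) := by rw [hxx, hrr]
        have : pt v y = pt v y' := by rw [← hfx y hy, ← hfx y' hy', hpp]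
        exact hyy (pt_inj this).2
      apply hvB
      refine Set.mem_iUnion.2 ⟨r y, ?_⟩
      have h1 : f (pt (x y) ((r y : ℝ))) 0 = v := by rw [hfx y hy]; rfl
      have h2 : f (pt (x y') ((r y : ℝ))) 0 = v := by rw [hrr, hfx y' hy']; rfl
      rcases lt_or_gt_of_ne hxne with h | h
      · exact ⟨x y, hxE y hy, x y', hxE y' hy', h, h1, h2⟩
      · exact ⟨x y', hxE y' hy', x y, hxE y hy, h, h2, h1⟩
    have hfinal : #↥Eh ≤ #ℚ :=
      Cardinal.mk_le_of_injective (f := fun y : ↥Eh => r y)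
        (fun a b hab => Subtype.ext (hrinj a.2 b.2 hab))
    rw [show (#ℚ) = ℵ₀ from Cardinal.mk_denumerable ℚ] at hfinal
    exact Cardinal.aleph0_lt_aleph_one.not_ge (hE1.trans hfinal)
end
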